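/- Define uniform B-splines recursively by B_1 = indicator function of [0,1] and B_i(x) = ∫_0^1 B_{i-1}(x-t) dt for i ≥ 2. Then for every integer i ≥ 2 and every integer j, (i-1)!·B_i(j) = A(i-1, j-1), where A(n,k) is the Eulerian number (number of permutations of {1,...,n} with exactly k ascents), with the convention A(n,k) = 0 for k < 0 or k ≥ n. -/

import Mathlib

/-- The number of ascents of a permutation of `Fin n`. -/
noncomputable def ascents (n : ℕ) (σ : Equiv.Perm (Fin n)) : ℕ :=
  Nat.card {i : Fin n // ∃ h : (i : ℕ) + 1 < n, σ i < σ ⟨(i : ℕ) + 1, h⟩}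

/-- The Eulerian number `A(n,k)`: the number of permutations of an `n`-element set
with exactly `k` ascents. -/
noncomputable def eulerianNumber (n k : ℕ) : ℕ :=
  Nat.card {σ : Equiv.Perm (Fin n) // ascents n σ = k}

/-- Eulerian numbers with integer index, with convention `A(n,k) = 0`
for `k < 0` or `k ≥ n`. -/
noncomputable def eulerianZ (n : ℕ) (k : ℤ) : ℕ :=
  if 0 ≤ k ∧ k < (n : ℤ) then eulerianNumber n k.toNat else 0

/-- The uniform B-splines, defined recursively:
`B₁` is the indicator function of `[0,1]`, and `B_i(x) = ∫_0^1 B_{i-1}(x-t) dt`. -/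
noncomputable def Bspline : ℕ → ℝ → ℝ
  | 0 => fun _ => 0
  | 1 => fun x => if x ∈ Set.Icc (0:ℝ) 1 then 1 else 0
  | (i+2) => fun x => ∫ t in (0:ℝ)..1, Bspline (i+1) (x - t)

open MeasureTheory intervalIntegral Finset Equiv

/-- truncated power derivative -/
lemma tp_hasDerivAt (n : ℕ) (hn : 1 ≤ n) (c x : ℝ) :
    HasDerivAt (fun u => max (u - c) 0 ^ (n+1)) (((n:ℝ)+1) * max (x - c) 0 ^ n) x := by
  rcases lt_trichotomy x c with h | h | h
  · have hc : HasDerivAt (fun _ : ℝ => (0:ℝ)) 0 x := hasDerivAt_const x 0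
    have he : (fun u : ℝ => max (u - c) 0 ^ (n+1)) =ᶠ[nhds x] fun _ => (0:ℝ) := by
      filter_upwards [eventually_lt_nhds h] with u hu
      rw [max_eq_right (by linarith), zero_pow (by omega)]
    have hx : max (x - c) 0 = 0 := max_eq_right (by linarith)
    rw [hx, zero_pow (by omega), mul_zero]
    exact hc.congr_of_eventuallyEq he
  · subst h
    rw [hasDerivAt_iff_isLittleO]
    have hx : max (x - x) 0 = 0 := by simp
    simp only [hx, zero_pow (by omega : n ≠ 0), mul_zero, sub_self, max_self, smul_zero,
      sub_zero, zero_pow (by omega : n + 1 ≠ 0)]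
    rw [Asymptotics.isLittleO_iff]
    intro ε hε
    have hev := Metric.ball_mem_nhds x (lt_min hε one_pos)
    filter_upwards [hev] with u hu'
    rw [Metric.mem_ball, Real.dist_eq] at hu'
    have hu : |u - x| < min ε 1 := hu'
    have h1 : max (u - x) 0 ≤ |u - x| := max_le (le_abs_self _) (abs_nonneg _)
    have hm0 : 0 ≤ max (u - x) 0 := le_max_right _ _
    have hm1 : max (u - x) 0 ≤ 1 := h1.trans (le_of_lt (lt_of_lt_of_le hu (min_le_right _ _)))
    have hme : max (u - x) 0 ≤ ε := h1.trans (le_of_lt (lt_of_lt_of_le hu (min_le_left _ _)))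
    have h2 : max (u - x) 0 ^ (n+1) ≤ ε * |u - x| := by
      calc max (u - x) 0 ^ (n+1) = max (u-x) 0 ^ (n-1) * max (u-x) 0 * max (u-x) 0 := by
            have hnn : n + 1 = (n-1) + 1 + 1 := by omega
            rw [hnn, pow_succ, pow_succ, mul_assoc]
        _ ≤ 1 * ε * |u - x| := by
            gcongr
            exact pow_le_one₀ hm0 hm1
        _ = ε * |u - x| := by ring
    calc ‖max (u - x) 0 ^ (n+1)‖ = max (u - x) 0 ^ (n+1) := by
          rw [Real.norm_eq_abs, abs_of_nonneg (pow_nonneg hm0 _)]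
      _ ≤ ε * |u - x| := h2
      _ = ε * ‖u - x‖ := by rw [Real.norm_eq_abs]
  · have key : HasDerivAt (fun u : ℝ => (u - c) ^ (n+1)) (((n:ℝ)+1) * (x - c)^n) x := by
      have := ((hasDerivAt_id x).sub_const c).pow (n+1)
      simpa [mul_comm, Nat.add_sub_cancel, Pi.pow_def] using this
    have he : (fun u : ℝ => max (u - c) 0 ^ (n+1)) =ᶠ[nhds x] fun u => (u - c) ^ (n+1) := by
      filter_upwards [eventually_gt_nhds h] with u hu
      rw [max_eq_left (by linarith)]
    rw [max_eq_left (by linarith)]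
    exact key.congr_of_eventuallyEq he

lemma tp_continuous (n : ℕ) (c : ℝ) : Continuous (fun u : ℝ => max (u - c) 0 ^ n) :=
  ((continuous_id.sub continuous_const).max continuous_const).pow n

lemma tp_integral (n : ℕ) (hn : 1 ≤ n) (c a b : ℝ) :
    ∫ u in a..b, max (u - c) 0 ^ n
      = (max (b - c) 0 ^ (n+1) - max (a - c) 0 ^ (n+1)) / ((n:ℝ)+1) := by
  have hd : ∀ x ∈ Set.uIcc a b,
      HasDerivAt (fun u => max (u - c) 0 ^ (n+1) / ((n:ℝ)+1)) (max (x - c) 0 ^ n) x := by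
    intro x _
    have := (tp_hasDerivAt n hn c x).div_const ((n:ℝ)+1)
    have hne : ((n:ℝ)+1) ≠ 0 := by positivity
    simpa [mul_div_assoc, mul_div_cancel_left₀ _ hne] using this
  have hint : IntervalIntegrable (fun u : ℝ => max (u - c) 0 ^ n) volume a b :=
    (tp_continuous n c).intervalIntegrable a b
  rw [integral_eq_sub_of_hasDerivAt hd hint]
  ring

lemma sum_pascal (n : ℕ) (p : ℕ → ℝ) :
    ∑ k ∈ range (n+2), (-1:ℝ)^k * ((n+1).choose k) * (p k - p (k+1))
      = ∑ k ∈ range (n+3), (-1:ℝ)^k * ((n+2).choose k) * p k := by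
  have hpas : ∀ k, ((n+2).choose (k+1) : ℝ) = (n+1).choose k + (n+1).choose (k+1) := by
    intro k
    rw [show n + 2 = (n+1) + 1 from rfl, Nat.choose_succ_succ]
    push_cast; ring
  have hL : ∑ k ∈ range (n+2), (-1:ℝ)^k * ((n+1).choose k) * (p k - p (k+1))
      = (∑ k ∈ range (n+2), (-1:ℝ)^k * ((n+1).choose k) * p k)
        - ∑ k ∈ range (n+2), (-1:ℝ)^k * ((n+1).choose k) * p (k+1) := by
    rw [← Finset.sum_sub_distrib]
    exact Finset.sum_congr rfl fun k _ => by ring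
  have hR1 : ∑ k ∈ range (n+3), (-1:ℝ)^k * ((n+2).choose k) * p k
      = (∑ k ∈ range (n+2), (-1:ℝ)^(k+1) * ((n+2).choose (k+1)) * p (k+1)) + p 0 := by
    rw [Finset.sum_range_succ' (fun k => (-1:ℝ)^k * ((n+2).choose k) * p k) (n+2)]
    norm_num
  have h2 : ∑ k ∈ range (n+2), (-1:ℝ)^(k+1) * ((n+2).choose (k+1)) * p (k+1)
      = (∑ k ∈ range (n+2), (-1:ℝ)^(k+1) * ((n+1).choose k) * p (k+1))
        + ∑ k ∈ range (n+2), (-1:ℝ)^(k+1) * ((n+1).choose (k+1)) * p (k+1) := by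
    rw [← Finset.sum_add_distrib]
    exact Finset.sum_congr rfl fun k _ => by rw [hpas k]; ring
  have h3 : (∑ k ∈ range (n+2), (-1:ℝ)^(k+1) * ((n+1).choose (k+1)) * p (k+1)) + p 0
      = ∑ k ∈ range (n+2), (-1:ℝ)^k * ((n+1).choose k) * p k := by
    have e1 := Finset.sum_range_succ' (fun k => (-1:ℝ)^k * ((n+1).choose k) * p k) (n+2)
    have e2 := Finset.sum_range_succ (fun k => (-1:ℝ)^k * ((n+1).choose k) * p k) (n+2)
    rw [Nat.choose_eq_zero_of_lt (show n+1 < n+2 by omega)] at e2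
    norm_num at e1 e2
    rw [← e1, e2]
  have h4 : ∑ k ∈ range (n+2), (-1:ℝ)^k * ((n+1).choose k) * p (k+1)
      = - ∑ k ∈ range (n+2), (-1:ℝ)^(k+1) * ((n+1).choose k) * p (k+1) := by
    rw [← Finset.sum_neg_distrib]
    exact Finset.sum_congr rfl fun k _ => by ring
  rw [hL, hR1, h2, h4, ← h3]
  ring

lemma B2_eq (x : ℝ) : Bspline 2 x = max (min 1 x - max 0 (x-1)) 0 := by
  show (∫ t in (0:ℝ)..1, Bspline 1 (x - t)) = _
  have h1 : (∫ t in (0:ℝ)..1, Bspline 1 (x - t)) = ∫ u in (x-1)..(x-0), Bspline 1 u := by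
    exact intervalIntegral.integral_comp_sub_left (Bspline 1) x
  rw [h1]
  norm_num
  have h2 : (fun u : ℝ => Bspline 1 u) =ᵐ[volume] (Set.Ioc (0:ℝ) 1).indicator (fun _ => (1:ℝ)) := by
    have hnull : volume ({(0:ℝ)} : Set ℝ) = 0 := measure_singleton 0
    refine measure_mono_null ?_ hnull
    intro u hu
    simp only [Set.mem_setOf_eq] at hu
    by_contra h0
    apply hu
    show Bspline 1 u = _
    show (if u ∈ Set.Icc (0:ℝ) 1 then (1:ℝ) else 0) = _
    have hu0 : u ≠ 0 := h0
    rw [Set.indicator_apply]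
    by_cases h : u ∈ Set.Ioc (0:ℝ) 1
    · rw [if_pos h, if_pos (Set.Ioc_subset_Icc_self h)]
    · rw [if_neg h, if_neg]
      intro hmem
      exact h ⟨lt_of_le_of_ne hmem.1 (Ne.symm hu0), hmem.2⟩
  have h3 : (∫ u in (x-1)..x, Bspline 1 u)
      = ∫ u in (x-1)..x, (Set.Ioc (0:ℝ) 1).indicator (fun _ => (1:ℝ)) u := by
    apply intervalIntegral.integral_congr_ae
    filter_upwards [h2] with u hu _
    exact hu
  rw [h3]
  rw [intervalIntegral.integral_of_le (by linarith : x - 1 ≤ x)]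
  rw [MeasureTheory.integral_indicator measurableSet_Ioc]
  rw [Measure.restrict_restrict measurableSet_Ioc, Set.Ioc_inter_Ioc]
  simp only [MeasureTheory.integral_const, smul_eq_mul, mul_one]
  rw [measureReal_restrict_apply_univ, Real.volume_real_Ioc]

lemma Bspline_formula (n : ℕ) (hn : 1 ≤ n) : ∀ x : ℝ,
    (n.factorial : ℝ) * Bspline (n+1) x
      = ∑ k ∈ range (n+2), (-1:ℝ)^k * ((n+1).choose k) * max (x - k) 0 ^ n := by
  induction n, hn using Nat.le_induction with
  | base =>
    intro x
    rw [B2_eq]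
    rw [show (2:ℕ)+1 = 3 from rfl]  -- dummy
    simp only [Finset.sum_range_succ, Finset.sum_range_zero, Nat.factorial]
    norm_num
    rcases le_total x 0 with h | h
    · rw [min_eq_right (by linarith), max_eq_left (by linarith : x - 1 ≤ (0:ℝ)),
        max_eq_right (by linarith : x - 0 ≤ (0:ℝ)), max_eq_right h,
        max_eq_right (by linarith : x - 1 ≤ (0:ℝ)), max_eq_right (by linarith : x - 2 ≤ (0:ℝ))]
      ring
    · rcases le_total x 1 with h1 | h1
      · rw [min_eq_right h1, max_eq_left (by linarith : x - 1 ≤ (0:ℝ)),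
          max_eq_left (by linarith : (0:ℝ) ≤ x - 0), max_eq_left h,
          max_eq_right (by linarith : x - 1 ≤ (0:ℝ)), max_eq_right (by linarith : x - 2 ≤ (0:ℝ))]
        ring
      · rcases le_total x 2 with h2 | h2
        · rw [min_eq_left h1, max_eq_right (by linarith : (0:ℝ) ≤ x - 1),
            max_eq_left (by linarith : (0:ℝ) ≤ 1 - (x - 1)), max_eq_left (by linarith : (0:ℝ) ≤ x),
            max_eq_left (by linarith : (0:ℝ) ≤ x - 1), max_eq_right (by linarith : x - 2 ≤ (0:ℝ))]
          ring
        · rw [min_eq_left h1, max_eq_right (by linarith : (0:ℝ) ≤ x - 1),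
            max_eq_right (by linarith : 1 - (x - 1) ≤ (0:ℝ)), max_eq_left (by linarith : (0:ℝ) ≤ x),
            max_eq_left (by linarith : (0:ℝ) ≤ x - 1), max_eq_left (by linarith : (0:ℝ) ≤ x - 2)]
          ring
  | succ n hn ih =>
    intro x
    have hcong := ih
    have hB : Bspline (n+1+1) x = ∫ u in (x-1)..x, Bspline (n+1) u := by
      show (∫ t in (0:ℝ)..1, Bspline (n+1) (x - t)) = _
      have := intervalIntegral.integral_comp_sub_left (Bspline (n+1)) x (a := 0) (b := 1)
      simpa using this
    have hfac : ((n+1).factorial : ℝ) = ((n:ℝ)+1) * (n.factorial : ℝ) := by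
      rw [Nat.factorial_succ]; push_cast; ring
    have hint : ∫ u in (x-1)..x, (n.factorial : ℝ) * Bspline (n+1) u
        = ∑ k ∈ range (n+2), ((-1:ℝ)^k * ((n+1).choose k)
            * ((max (x - k) 0 ^ (n+1) - max (x - 1 - k) 0 ^ (n+1)) / ((n:ℝ)+1))) := by
      rw [intervalIntegral.integral_congr (g := fun u =>
        ∑ k ∈ range (n+2), (-1:ℝ)^k * ((n+1).choose k) * max (u - k) 0 ^ n)
        (fun u _ => hcong u)]
      rw [intervalIntegral.integral_finset_sum
        (f := fun k u => (-1:ℝ)^k * ((n+1).choose k) * max (u - (k:ℝ)) 0 ^ n)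
        (fun k _ => ((continuous_const.mul (tp_continuous n (k:ℝ))).intervalIntegrable (x-1) x))]
      exact Finset.sum_congr rfl fun k _ => by
        rw [intervalIntegral.integral_const_mul, tp_integral n hn k (x-1) x]
    have key : ((n+1).factorial : ℝ) * Bspline (n+1+1) x
        = ∑ k ∈ range (n+2), (-1:ℝ)^k * ((n+1).choose k)
            * (max (x - k) 0 ^ (n+1) - max (x - 1 - k) 0 ^ (n+1)) := by
      rw [hB, hfac, mul_assoc, ← intervalIntegral.integral_const_mul, hint, Finset.mul_sum]
      refine Finset.sum_congr rfl fun k _ => ?_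
      field_simp
    rw [key]
    have hshift : ∀ k : ℕ, max (x - 1 - (k:ℝ)) 0 = max (x - ((k+1:ℕ):ℝ)) 0 := by
      intro k; push_cast; ring_nf
    have := sum_pascal n (fun k => max (x - (k:ℝ)) 0 ^ (n+1))
    rw [← this]
    refine Finset.sum_congr rfl fun k _ => ?_
    rw [hshift k]

/-- word of a permutation, as ℕ-valued function -/
def word (n : ℕ) (σ : Perm (Fin n)) (i : ℕ) : ℕ :=
  if h : i < n then (σ ⟨i, h⟩ : ℕ) else 0

lemma word_lt (n : ℕ) (σ : Perm (Fin n)) {i : ℕ} (h : i < n) : word n σ i < n := by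
  rw [word, dif_pos h]; exact (σ ⟨i, h⟩).isLt

open Classical in
lemma ascents_eq (n : ℕ) (σ : Perm (Fin n)) :
    ascents n σ = ((range (n-1)).filter (fun i => word n σ i < word n σ (i+1))).card := by
  classical
  rw [ascents, Nat.card_eq_fintype_card, Fintype.card_subtype]
  apply Finset.card_bij (fun (i : Fin n) _ => (i : ℕ))
  · intro i hi
    simp only [Finset.mem_filter, Finset.mem_univ, true_and] at hi ⊢
    obtain ⟨h, hlt⟩ := hi
    refine ⟨Finset.mem_range.mpr (by omega), ?_⟩
    rw [word, word, dif_pos i.isLt, dif_pos h]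
    simpa [Fin.eta] using hlt
  · intro a _ b _ hab
    exact Fin.ext hab
  · intro j hj
    simp only [Finset.mem_filter, Finset.mem_range] at hj
    obtain ⟨hj1, hj2⟩ := hj
    have hjn : j < n := by omega
    refine ⟨⟨j, hjn⟩, ?_, rfl⟩
    simp only [Finset.mem_filter, Finset.mem_univ, true_and]
    refine ⟨by omega, ?_⟩
    rw [word, word, dif_pos hjn, dif_pos (show j + 1 < n by omega)] at hj2
    simpa [Fin.eta] using hj2

/-- insert the maximum value at position `p` -/
def ins {n : ℕ} (σ : Perm (Fin n)) (p : Fin (n+1)) : Perm (Fin (n+1)) :=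
  ((finSuccEquiv' p).trans (Equiv.optionCongr σ)).trans (finSuccEquiv' (Fin.last n)).symm

lemma ins_apply_self {n : ℕ} (σ : Perm (Fin n)) (p : Fin (n+1)) :
    ins σ p p = Fin.last n := by
  simp [ins]

lemma ins_apply_succAbove {n : ℕ} (σ : Perm (Fin n)) (p : Fin (n+1)) (r : Fin n) :
    ins σ p (p.succAbove r) = (σ r).castSucc := by
  simp [ins, ← Fin.succAbove_last]

lemma ins_bijective {n : ℕ} :
    Function.Bijective (fun x : Perm (Fin n) × Fin (n+1) => ins x.1 x.2) := by
  rw [Fintype.bijective_iff_injective_and_card]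
  constructor
  · rintro ⟨σ, p⟩ ⟨σ', p'⟩ h
    simp only at h
    have hp : p = p' := by
      by_contra hne
      obtain ⟨r, hr⟩ := Fin.exists_succAbove_eq hne
      have h1 : ins σ' p' p = (σ' r).castSucc := by
        conv_lhs => rw [← hr]
        rw [ins_apply_succAbove]
      have h2 : ins σ p p = Fin.last n := ins_apply_self σ p
      rw [h, h1] at h2
      exact absurd h2 (Fin.castSucc_lt_last (σ' r)).ne
    subst hp
    have hσ : σ = σ' := by
      ext r
      have h2 := DFunLike.congr_fun h (p.succAbove r)
      simp only [ins_apply_succAbove] at h2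
      exact congrArg Fin.val (Fin.castSucc_injective n h2)
    rw [hσ]
  · simp [Fintype.card_perm, Nat.factorial_succ, mul_comm]

lemma word_ins_lt {n : ℕ} (σ : Perm (Fin n)) (p : Fin (n+1)) {q : ℕ} (hq : q < (p:ℕ)) :
    word (n+1) (ins σ p) q = word n σ q := by
  have hqn : q < n := by have := p.isLt; omega
  have hq1 : q < n + 1 := by omega
  have hfin : (⟨q, hq1⟩ : Fin (n+1)) = p.succAbove ⟨q, hqn⟩ := by
    rw [Fin.succAbove_of_castSucc_lt]
    · rfl
    · exact hq
  rw [word, word, dif_pos hq1, dif_pos hqn, hfin, ins_apply_succAbove]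
  rfl

lemma word_ins_self {n : ℕ} (σ : Perm (Fin n)) (p : Fin (n+1)) :
    word (n+1) (ins σ p) p = n := by
  rw [word, dif_pos p.isLt]
  have : (⟨(p:ℕ), p.isLt⟩ : Fin (n+1)) = p := Fin.eta p p.isLt
  rw [this, ins_apply_self]
  rfl

lemma word_ins_gt {n : ℕ} (σ : Perm (Fin n)) (p : Fin (n+1)) {q : ℕ}
    (hq : (p:ℕ) < q) (hqn : q < n + 1) :
    word (n+1) (ins σ p) q = word n σ (q - 1) := by
  have hq1 : q - 1 < n := by omega
  have hfin : (⟨q, hqn⟩ : Fin (n+1)) = p.succAbove ⟨q - 1, hq1⟩ := by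
    rw [Fin.succAbove_of_le_castSucc]
    · ext
      show q = (q - 1) + 1
      omega
    · rw [Fin.le_castSucc_iff, Fin.lt_iff_val_lt_val, Fin.val_succ]
      show (p:ℕ) < (q - 1) + 1
      omega
  rw [word, word, dif_pos hqn, dif_pos hq1, hfin, ins_apply_succAbove]
  rfl

lemma card_filter_partition (s : Finset ℕ) (c1 c2 c3 : ℕ → Prop)
    [DecidablePred c1] [DecidablePred c2] [DecidablePred c3]
    (h : ∀ x ∈ s, c1 x ∨ c2 x ∨ c3 x)
    (h12 : ∀ x, ¬(c1 x ∧ c2 x)) (h13 : ∀ x, ¬(c1 x ∧ c3 x)) (h23 : ∀ x, ¬(c2 x ∧ c3 x)) :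
    s.card = (s.filter c1).card + (s.filter c2).card + (s.filter c3).card := by
  have e21 : (s.filter (fun x => ¬ c1 x)).filter c2 = s.filter c2 := by
    rw [Finset.filter_filter]
    apply Finset.filter_congr
    intro x _
    simp only [and_iff_right_iff_imp]
    exact fun h2 h1 => h12 x ⟨h1, h2⟩
  have e22 : (s.filter (fun x => ¬ c1 x)).filter (fun x => ¬ c2 x) = s.filter c3 := by
    rw [Finset.filter_filter]
    apply Finset.filter_congr
    intro x hx
    constructor
    · rintro ⟨hn1, hn2⟩
      rcases h x hx with h' | h' | h'
      · exact absurd h' hn1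
      · exact absurd h' hn2
      · exact h'
    · intro h3
      exact ⟨fun h1 => h13 x ⟨h1, h3⟩, fun h2 => h23 x ⟨h2, h3⟩⟩
  have h1 := Finset.card_filter_add_card_filter_not (s := s) (p := c1)
  have h2 := Finset.card_filter_add_card_filter_not
    (s := s.filter (fun x => ¬ c1 x)) (p := c2)
  rw [e21, e22] at h2
  omega

open Classical in
lemma asc_ins (n : ℕ) (σ : Perm (Fin n)) (p : Fin (n+1)) :
    ascents (n+1) (ins σ p)
      = if (p:ℕ) = 0 ∨ (1 ≤ (p:ℕ) ∧
          (p:ℕ) - 1 ∈ (range (n-1)).filter (fun i => word n σ i < word n σ (i+1)))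
        then ascents n σ else ascents n σ + 1 := by
  classical
  set A : Finset ℕ := (range (n-1)).filter (fun i => word n σ i < word n σ (i+1)) with hA
  set N : Finset ℕ :=
    (range n).filter (fun q => word (n+1) (ins σ p) q < word (n+1) (ins σ p) (q+1)) with hN
  have hAmem : ∀ j, j ∈ A ↔ (j < n - 1 ∧ word n σ j < word n σ (j+1)) := by
    intro j; rw [hA, Finset.mem_filter, Finset.mem_range]
  have hNmem : ∀ q, q ∈ N ↔ (q < n ∧ word (n+1) (ins σ p) q < word (n+1) (ins σ p) (q+1)) := by
    intro q; rw [hN, Finset.mem_filter, Finset.mem_range]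
  have hpn : (p:ℕ) < n + 1 := p.isLt
  have holda : ascents n σ = A.card := ascents_eq n σ
  have hnewa : ascents (n+1) (ins σ p) = N.card := by
    have := ascents_eq (n+1) (ins σ p)
    rw [this, hN]
    norm_num
  -- partitions
  have hpartA : A.card = (A.filter (fun j => j+1 < (p:ℕ))).card
      + (A.filter (fun j => j+1 = (p:ℕ))).card + (A.filter (fun j => (p:ℕ) ≤ j)).card := by
    apply card_filter_partition <;> intros <;> omega
  have hpartN : N.card = (N.filter (fun j => j+1 < (p:ℕ))).card
      + (N.filter (fun j => j+1 = (p:ℕ))).card + (N.filter (fun j => (p:ℕ) ≤ j)).card := by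
    apply card_filter_partition <;> intros <;> omega
  -- piece 1
  have e1 : N.filter (fun j => j+1 < (p:ℕ)) = A.filter (fun j => j+1 < (p:ℕ)) := by
    ext q
    simp only [Finset.mem_filter, hNmem, hAmem]
    constructor
    · rintro ⟨⟨hq, hw⟩, hqp⟩
      rw [word_ins_lt σ p (by omega), word_ins_lt σ p (by omega)] at hw
      exact ⟨⟨by omega, hw⟩, hqp⟩
    · rintro ⟨⟨hq, hw⟩, hqp⟩
      rw [word_ins_lt σ p (by omega : q < (p:ℕ)), word_ins_lt σ p (by omega : q + 1 < (p:ℕ))]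
      exact ⟨⟨by omega, hw⟩, hqp⟩
  -- piece 2
  have e2 : N.filter (fun j => j+1 = (p:ℕ)) = if 1 ≤ (p:ℕ) then {(p:ℕ)-1} else ∅ := by
    split_ifs with hp1
    · ext q
      simp only [Finset.mem_filter, hNmem, Finset.mem_singleton]
      constructor
      · rintro ⟨_, hqp⟩; omega
      · intro hq
        have hq' : q + 1 = (p:ℕ) := by omega
        refine ⟨⟨by omega, ?_⟩, hq'⟩
        rw [word_ins_lt σ p (by omega), show q + 1 = ((p:ℕ)) from hq', word_ins_self]
        exact word_lt n σ (by omega)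
    · ext q
      simp only [Finset.mem_filter, hNmem, Finset.notMem_empty, iff_false]
      rintro ⟨_, hqp⟩; omega
  -- piece 3
  have e3 : N.filter (fun j => (p:ℕ) ≤ j) = (A.filter (fun j => (p:ℕ) ≤ j)).image (· + 1) := by
    ext q
    simp only [Finset.mem_filter, hNmem, Finset.mem_image, hAmem]
    constructor
    · rintro ⟨⟨hq, hw⟩, hqp⟩
      have hqne : q ≠ (p:ℕ) := by
        intro hq0
        rw [hq0, word_ins_self, word_ins_gt σ p (by omega) (by omega)] at hw
        exact absurd hw (by
          have := word_lt n σ (show (p:ℕ) + 1 - 1 < n by omega)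
          omega)
      have hqgt : (p:ℕ) < q := by omega
      rw [word_ins_gt σ p hqgt (by omega), word_ins_gt σ p (by omega) (by omega)] at hw
      refine ⟨q - 1, ⟨⟨by omega, ?_⟩, by omega⟩, by omega⟩
      have : q + 1 - 1 = (q - 1) + 1 := by omega
      rwa [this] at hw
    · rintro ⟨j, ⟨⟨hj, hw⟩, hjp⟩, rfl⟩
      refine ⟨⟨by omega, ?_⟩, by omega⟩
      rw [word_ins_gt σ p (by omega) (by omega), word_ins_gt σ p (by omega) (by omega)]
      have h1 : j + 1 - 1 = j := by omega
      have h2 : j + 1 + 1 - 1 = j + 1 := by omega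
      rw [h1, h2]
      exact hw
  -- piece 2 for A
  have a2 : A.filter (fun j => j+1 = (p:ℕ))
      = if 1 ≤ (p:ℕ) ∧ (p:ℕ) - 1 ∈ A then {(p:ℕ)-1} else ∅ := by
    split_ifs with hp1
    · ext q
      simp only [Finset.mem_filter, Finset.mem_singleton]
      constructor
      · rintro ⟨_, hqp⟩; omega
      · intro hq
        subst hq
        exact ⟨hp1.2, by omega⟩
    · ext q
      simp only [Finset.mem_filter, Finset.notMem_empty, iff_false]
      rintro ⟨hqA, hqp⟩
      apply hp1
      refine ⟨by omega, ?_⟩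
      have : (p:ℕ) - 1 = q := by omega
      rwa [this]
  have c3eq : (N.filter (fun j => (p:ℕ) ≤ j)).card = (A.filter (fun j => (p:ℕ) ≤ j)).card := by
    rw [e3]
    exact Finset.card_image_of_injective _ (fun a b => by omega)
  rw [hnewa, holda, hpartN, hpartA, e1, e2, a2, c3eq]
  by_cases hp0 : (p:ℕ) = 0
  · have hnp : ¬ 1 ≤ (p:ℕ) := by omega
    rw [if_pos (show (p:ℕ) = 0 ∨ (1 ≤ (p:ℕ) ∧ (p:ℕ)-1 ∈ A) from Or.inl hp0),
      if_neg hnp, if_neg (fun h => hnp h.1)]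
  · by_cases hmid : (p:ℕ) - 1 ∈ A
    · have h1 : 1 ≤ (p:ℕ) := by omega
      rw [if_pos (show (p:ℕ) = 0 ∨ (1 ≤ (p:ℕ) ∧ (p:ℕ)-1 ∈ A) from Or.inr ⟨h1, hmid⟩),
        if_pos h1, if_pos (⟨h1, hmid⟩ : 1 ≤ (p:ℕ) ∧ (p:ℕ)-1 ∈ A)]
    · have h1 : 1 ≤ (p:ℕ) := by omega
      rw [if_neg (show ¬((p:ℕ) = 0 ∨ (1 ≤ (p:ℕ) ∧ (p:ℕ)-1 ∈ A)) from
          fun h => h.elim (fun h0 => absurd h0 hp0) (fun hh => hmid hh.2)),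
        if_pos h1, if_neg (show ¬(1 ≤ (p:ℕ) ∧ (p:ℕ)-1 ∈ A) from fun h => hmid h.2)]
      simp only [Finset.card_singleton, Finset.card_empty]
      omega

open Classical in
lemma eulerian_filter (n k : ℕ) :
    eulerianNumber n k
      = ((univ : Finset (Perm (Fin n))).filter (fun σ => ascents n σ = k)).card := by
  rw [eulerianNumber, Nat.card_eq_fintype_card, Fintype.card_subtype]

lemma card_filter_fin (m : ℕ) (Q : ℕ → Prop) [DecidablePred Q] :
    ((univ : Finset (Fin m)).filter (fun p : Fin m => Q p.val)).card = ((range m).filter Q).card := by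
  refine Finset.card_bij (fun (p : Fin m) (_ : p ∈ (univ : Finset (Fin m)).filter
      (fun p : Fin m => Q p.val)) => p.val) ?_ ?_ ?_
  · intro p hp
    simp only [Finset.mem_filter, Finset.mem_univ, true_and, Finset.mem_range] at hp ⊢
    exact ⟨p.isLt, hp⟩
  · intro a _ b _ h
    exact Fin.ext h
  · intro j hj
    simp only [Finset.mem_filter, Finset.mem_range] at hj
    exact ⟨⟨j, hj.1⟩, by simp [hj.2], rfl⟩

lemma ascents_le (n : ℕ) (σ : Perm (Fin n)) : ascents n σ ≤ n - 1 := by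
  classical
  rw [ascents_eq]
  exact (Finset.card_filter_le _ _).trans (by simp)

open Classical in
lemma count_positions (n : ℕ) (σ : Perm (Fin n)) (k : ℕ) :
    ((univ : Finset (Fin (n+1))).filter (fun p => ascents (n+1) (ins σ p) = k)).card
      = if k = ascents n σ then ascents n σ + 1
        else if k = ascents n σ + 1 then n - ascents n σ else 0 := by
  classical
  set A : Finset ℕ := (range (n-1)).filter (fun i => word n σ i < word n σ (i+1)) with hA
  have ha : ascents n σ = A.card := ascents_eq n σ
  have haln : A.card ≤ n - 1 := (Finset.card_filter_le _ _).trans (by simp)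
  have hcond : ∀ p : Fin (n+1), (ascents (n+1) (ins σ p) = k)
      ↔ (if ((p:ℕ) = 0 ∨ (1 ≤ (p:ℕ) ∧ (p:ℕ) - 1 ∈ A)) then ascents n σ else ascents n σ + 1) = k := by
    intro p
    rw [asc_ins n σ p]
  have hfe : ((univ : Finset (Fin (n+1))).filter (fun p => ascents (n+1) (ins σ p) = k))
      = ((univ : Finset (Fin (n+1))).filter (fun p : Fin (n+1) =>
          (if (p.val = 0 ∨ (1 ≤ p.val ∧ p.val - 1 ∈ A)) then ascents n σ else ascents n σ + 1) = k)) := by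
    apply Finset.filter_congr
    intro p _
    rw [hcond p]
  rw [hfe]
  -- the set of positions where the condition cond0 holds
  have hcount0 : ((univ : Finset (Fin (n+1))).filter
      (fun p : Fin (n+1) => (p.val = 0 ∨ (1 ≤ p.val ∧ p.val - 1 ∈ A)))).card = A.card + 1 := by
    rw [card_filter_fin (n+1) (fun q => q = 0 ∨ (1 ≤ q ∧ q - 1 ∈ A))]
    have : ((range (n+1)).filter (fun q => q = 0 ∨ (1 ≤ q ∧ q - 1 ∈ A)))
        = insert 0 (A.image (· + 1)) := by
      ext q
      simp only [Finset.mem_filter, Finset.mem_range, Finset.mem_insert, Finset.mem_image]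
      constructor
      · rintro ⟨hq, h0 | ⟨h1, hmem⟩⟩
        · exact Or.inl h0
        · exact Or.inr ⟨q - 1, hmem, by omega⟩
      · rintro (rfl | ⟨j, hj, rfl⟩)
        · exact ⟨by omega, Or.inl rfl⟩
        · have hjr : j < n - 1 := by
            have := Finset.mem_filter.mp (hA ▸ hj)
            exact Finset.mem_range.mp this.1
          exact ⟨by omega, Or.inr ⟨by omega, by simpa using hj⟩⟩
    rw [this, Finset.card_insert_of_notMem (by simp), Finset.card_image_of_injective _
      (fun a b h => by omega), add_comm]
  by_cases hk : k = ascents n σ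
  · rw [if_pos hk]
    have : ((univ : Finset (Fin (n+1))).filter (fun p : Fin (n+1) =>
        (if (p.val = 0 ∨ (1 ≤ p.val ∧ p.val - 1 ∈ A)) then ascents n σ else ascents n σ + 1) = k))
        = ((univ : Finset (Fin (n+1))).filter
            (fun p : Fin (n+1) => (p.val = 0 ∨ (1 ≤ p.val ∧ p.val - 1 ∈ A)))) := by
      apply Finset.filter_congr
      intro p _
      split_ifs with h
      · exact iff_of_true (by omega) h
      · exact iff_of_false (by omega) h
    rw [this, hcount0, ha]
  · rw [if_neg hk]
    by_cases hk1 : k = ascents n σ + 1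
    · rw [if_pos hk1]
      have : ((univ : Finset (Fin (n+1))).filter (fun p : Fin (n+1) =>
          (if (p.val = 0 ∨ (1 ≤ p.val ∧ p.val - 1 ∈ A)) then ascents n σ else ascents n σ + 1) = k))
          = ((univ : Finset (Fin (n+1))).filter
              (fun p : Fin (n+1) => ¬(p.val = 0 ∨ (1 ≤ p.val ∧ p.val - 1 ∈ A)))) := by
        apply Finset.filter_congr
        intro p _
        split_ifs with h
        · exact iff_of_false (by omega) (fun hn => hn h)
        · exact iff_of_true (by omega) h
      rw [this]
      have htot := Finset.card_filter_add_card_filter_not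
        (s := (univ : Finset (Fin (n+1))))
        (p := fun p : Fin (n+1) => (p.val = 0 ∨ (1 ≤ p.val ∧ p.val - 1 ∈ A)))
      rw [hcount0] at htot
      have hu : (univ : Finset (Fin (n+1))).card = n + 1 := by simp
      rw [hu] at htot
      rw [ha]
      omega
    · rw [if_neg hk1]
      rw [Finset.card_eq_zero, Finset.filter_eq_empty_iff]
      intro p _
      split_ifs with h
      · omega
      · omega

open Classical in
lemma eulerian_sum (n K : ℕ) :
    eulerianNumber (n+1) K
      = ∑ σ : Perm (Fin n), ((univ : Finset (Fin (n+1))).filter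
          (fun p => ascents (n+1) (ins σ p) = K)).card := by
  classical
  rw [eulerian_filter, Finset.card_filter]
  rw [← Function.Bijective.sum_comp (ins_bijective (n := n))
    (fun τ => if ascents (n+1) τ = K then 1 else 0)]
  rw [Fintype.sum_prod_type]
  exact Finset.sum_congr rfl fun σ _ => (Finset.card_filter _ _).symm

lemma eulerianNumber_vanish (n k : ℕ) (hn : 1 ≤ n) (h : n ≤ k) : eulerianNumber n k = 0 := by
  classical
  rw [eulerian_filter, Finset.card_eq_zero, Finset.filter_eq_empty_iff]
  intro σ _
  have := ascents_le n σ
  omega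

lemma eulerian_zero (n : ℕ) : eulerianNumber (n+1) 0 = eulerianNumber n 0 := by
  classical
  rw [eulerian_sum n 0]
  have : ∀ σ : Perm (Fin n), ((univ : Finset (Fin (n+1))).filter
      (fun p => ascents (n+1) (ins σ p) = 0)).card
      = if ascents n σ = 0 then 1 else 0 := by
    intro σ
    rw [count_positions]
    by_cases h : ascents n σ = 0
    · rw [if_pos h.symm, if_pos h, h]
    · rw [if_neg (fun hh => h hh.symm), if_neg (by omega), if_neg h]
  rw [Finset.sum_congr rfl (fun σ _ => this σ)]
  rw [eulerian_filter, Finset.card_filter]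

lemma eulerian_succ (n k : ℕ) :
    eulerianNumber (n+1) (k+1)
      = (k+2) * eulerianNumber n (k+1) + (n-k) * eulerianNumber n k := by
  classical
  rw [eulerian_sum n (k+1)]
  have hpt : ∀ σ : Perm (Fin n), ((univ : Finset (Fin (n+1))).filter
      (fun p => ascents (n+1) (ins σ p) = k+1)).card
      = (if ascents n σ = k+1 then k+2 else 0) + (if ascents n σ = k then n-k else 0) := by
    intro σ
    rw [count_positions]
    by_cases h1 : ascents n σ = k+1
    · rw [if_pos h1.symm, if_pos h1, if_neg (by omega), h1]
    · by_cases h2 : ascents n σ = k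
      · rw [if_neg (fun hh => h1 hh.symm), if_pos (by omega), if_neg h1, if_pos h2, h2]
        omega
      · rw [if_neg (fun hh => h1 hh.symm), if_neg (by omega), if_neg h1, if_neg h2]
  rw [Finset.sum_congr rfl (fun σ _ => hpt σ), Finset.sum_add_distrib]
  congr 1
  · rw [← Finset.sum_filter, Finset.sum_const, smul_eq_mul, eulerian_filter, mul_comm]
  · rw [← Finset.sum_filter, Finset.sum_const, smul_eq_mul, eulerian_filter, mul_comm]

lemma eulerian_one : eulerianNumber 1 0 = 1 := by
  classical
  rw [eulerian_filter]
  have hall : ∀ σ : Perm (Fin 1), ascents 1 σ = 0 := by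
    intro σ
    rw [ascents_eq]
    simp
  rw [Finset.filter_true_of_mem (fun σ _ => hall σ)]
  simp [Fintype.card_perm]

lemma eulerianZ_eq (n : ℕ) (hn : 1 ≤ n) (k : ℤ) (hk : 0 ≤ k) :
    eulerianZ n k = eulerianNumber n k.toNat := by
  rw [eulerianZ]
  split_ifs with h
  · rfl
  · rw [eulerianNumber_vanish n k.toNat hn (by omega)]

lemma eulerianZ_neg (n : ℕ) (k : ℤ) (hk : k < 0) : eulerianZ n k = 0 := by
  rw [eulerianZ, if_neg (by omega)]

lemma eulerianZ_rec (n : ℕ) (hn : 1 ≤ n) (j : ℤ) :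
    (eulerianZ (n+1) (j-1) : ℤ) = j * eulerianZ n (j-1) + ((n:ℤ)+2-j) * eulerianZ n (j-2) := by
  rcases le_or_gt j 0 with hj | hj
  · rw [eulerianZ_neg _ _ (by omega), eulerianZ_neg _ _ (by omega),
      eulerianZ_neg _ _ (by omega)]
    simp
  · rcases eq_or_lt_of_le (show (1:ℤ) ≤ j from hj) with hj1 | hj1
    · -- j = 1
      rw [← hj1]
      norm_num
      rw [eulerianZ_eq (n+1) (by omega) 0 le_rfl, eulerianZ_eq n hn 0 le_rfl,
        eulerianZ_neg n (-1) (by omega)]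
      simp only [Int.toNat_zero, mul_zero, add_zero]
      rw [eulerian_zero]
      push_cast
      ring
    · -- j ≥ 2
      have hj2 : 2 ≤ j := hj1
      set k : ℕ := (j-2).toNat with hk
      have hjk : j = (k : ℤ) + 2 := by omega
      rw [eulerianZ_eq (n+1) (by omega) (j-1) (by omega), eulerianZ_eq n hn (j-1) (by omega),
        eulerianZ_eq n hn (j-2) (by omega)]
      have h1 : (j-1).toNat = k + 1 := by omega
      have h2 : (j-2).toNat = k := by omega
      rw [h1, h2, eulerian_succ n k]
      by_cases hkn : k ≤ n
      · push_cast [Nat.cast_sub hkn]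
        rw [hjk]
        ring
      · rw [eulerianNumber_vanish n k hn (by omega),
          eulerianNumber_vanish n (k+1) hn (by omega)]
        simp

noncomputable def Ssum (n : ℕ) (j : ℤ) : ℤ :=
  ∑ k ∈ range (n+2), (-1)^k * ((n+1).choose k) * (max (j - k) 0)^n

lemma Ssum_rec (n : ℕ) (hn : 1 ≤ n) (j : ℤ) :
    Ssum (n+1) j = j * Ssum n j + ((n:ℤ)+2-j) * Ssum n (j-1) := by
  have hm : ∀ k : ℕ, max (j - 1 - (k:ℤ)) 0 = max (j - ((k+1 : ℕ) : ℤ)) 0 := by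
    intro k; push_cast; ring_nf
  -- rewrite Ssum n (j-1)
  have h1 : Ssum n (j-1) = ∑ k ∈ range (n+2), (-1:ℤ)^k * ((n+1).choose k)
      * (max (j - ((k+1 : ℕ) : ℤ)) 0)^n := by
    rw [Ssum]
    exact Finset.sum_congr rfl fun k _ => by rw [hm k]
  set d : ℕ → ℤ := fun k => if k = 0 then 0
    else (-1:ℤ)^k * ((n+1).choose (k-1)) * (max (j - (k:ℤ)) 0)^n with hd
  have hdsum : ∑ k ∈ range (n+3), d k
      = - ∑ k ∈ range (n+2), (-1:ℤ)^k * ((n+1).choose k) * (max (j - ((k+1:ℕ):ℤ)) 0)^n := by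
    rw [Finset.sum_range_succ' d (n+2)]
    have hd0 : d 0 = 0 := by simp [hd]
    rw [hd0, add_zero, ← Finset.sum_neg_distrib]
    refine Finset.sum_congr rfl fun k _ => ?_
    rw [hd]
    simp only [Nat.add_sub_cancel, if_neg (Nat.succ_ne_zero k)]
    push_cast
    ring
  have hesum : ∑ k ∈ range (n+3), (-1:ℤ)^k * ((n+1).choose k) * (max (j - (k:ℤ)) 0)^n
      = Ssum n j := by
    rw [Finset.sum_range_succ, Nat.choose_eq_zero_of_lt (show n+1 < n+2 by omega), Ssum]
    push_cast
    ring
  have hperk : ∀ k : ℕ, (-1:ℤ)^k * ((n+2).choose k) * (max (j - (k:ℤ)) 0)^(n+1)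
      = j * ((-1:ℤ)^k * ((n+1).choose k) * (max (j - (k:ℤ)) 0)^n) - ((n:ℤ)+2-j) * d k := by
    intro k
    cases k with
    | zero =>
      have hd0 : d 0 = 0 := by simp [hd]
      rw [hd0, mul_zero, sub_zero]
      simp only [pow_zero, one_mul, Nat.choose_zero_right, Nat.cast_one,
        Nat.cast_zero, sub_zero]
      rcases le_or_gt j 0 with h | h
      · rw [max_eq_right (by omega)]
        rw [zero_pow (by omega : n ≠ 0), zero_pow (by omega : n + 1 ≠ 0)]
        ring
      · rw [max_eq_left (by omega)]
        rw [pow_succ]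
        ring
    | succ k' =>
      have hpascal : ((n+2).choose (k'+1) : ℤ) = (n+1).choose k' + (n+1).choose (k'+1) := by
        rw [show n + 2 = (n+1)+1 from rfl, Nat.choose_succ_succ]
        push_cast; ring
      have hmulid : ((k':ℤ)+1) * ((n+2).choose (k'+1)) = ((n:ℤ)+2) * ((n+1).choose k') := by
        have := Nat.add_one_mul_choose_eq (n+1) k'
        have h2 : (n+2) * ((n+1).choose k') = ((n+2).choose (k'+1)) * (k'+1) := by
          exact_mod_cast this
        have h3 : ((n:ℤ)+2) * ((n+1).choose k') = ((n+2).choose (k'+1)) * ((k':ℤ)+1) := by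
          exact_mod_cast h2
        linear_combination -h3
      have hdk : d (k'+1) = (-1:ℤ)^(k'+1) * ((n+1).choose k') * (max (j - ((k'+1:ℕ):ℤ)) 0)^n := by
        simp [hd]
      rw [hdk]
      rcases le_or_gt (j - ((k':ℤ)+1)) 0 with h | h
      · rw [show ((k'+1 : ℕ):ℤ) = (k':ℤ)+1 by push_cast; ring, max_eq_right (by omega)]
        rw [zero_pow (by omega : n ≠ 0), zero_pow (by omega : n + 1 ≠ 0)]
        ring
      · rw [show ((k'+1 : ℕ):ℤ) = (k':ℤ)+1 by push_cast; ring, max_eq_left (by omega)]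
        rw [pow_succ]
        push_cast
        linear_combination ((-1:ℤ)^(k'+1) * (j - ((k':ℤ)+1))^n) * (j * hpascal - hmulid)
  have hL : Ssum (n+1) j = ∑ k ∈ range (n+3), (-1:ℤ)^k * ((n+2).choose k)
      * (max (j - (k:ℤ)) 0)^(n+1) := by
    rw [Ssum]
  rw [hL, Finset.sum_congr rfl (fun k _ => hperk k), Finset.sum_sub_distrib,
    ← Finset.mul_sum, ← Finset.mul_sum, hesum, hdsum, h1]
  ring

lemma Ssum_eq (n : ℕ) (hn : 1 ≤ n) : ∀ j : ℤ, Ssum n j = (eulerianZ n (j-1) : ℤ) := by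
  induction n, hn using Nat.le_induction with
  | base =>
    intro j
    have hez : (eulerianZ 1 (j-1) : ℤ) = if j = 1 then 1 else 0 := by
      by_cases hj : j = 1
      · subst hj
        rw [eulerianZ, if_pos (by omega)]
        norm_num [eulerian_one]
      · rw [eulerianZ, if_neg (by omega)]
        rw [if_neg hj]
        rfl
    rw [hez, Ssum]
    simp only [Finset.sum_range_succ, Finset.sum_range_zero, pow_one]
    norm_num
    split_ifs with h <;> omega
  | succ n hn ih =>
    intro j
    have h2 : (j - 1) - 1 = j - 2 := by ring
    rw [Ssum_rec n hn j, ih j, ih (j-1), h2, ← eulerianZ_rec n hn j]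


/-- Schoenberg's identity: `(i-1)!·B_i(j) = A(i-1, j-1)` for `i ≥ 2` and integers `j`. -/
theorem stmt13 (i : ℕ) (hi : 2 ≤ i) (j : ℤ) :
    (Nat.factorial (i-1) : ℝ) * Bspline i (j : ℝ) = (eulerianZ (i-1) (j-1) : ℝ) := by
  obtain ⟨n, rfl⟩ : ∃ n, i = n + 2 := ⟨i - 2, by omega⟩
  have hn : 1 ≤ n + 1 := by omega
  have h1 : n + 2 - 1 = n + 1 := rfl
  rw [h1]
  rw [show n + 2 = (n+1) + 1 from rfl, Bspline_formula (n+1) hn (j:ℝ)]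
  have hcast : ∑ k ∈ range (n+1+2), (-1:ℝ)^k * (((n+1+1).choose k) : ℝ)
        * max ((j:ℝ) - k) 0 ^ (n+1)
      = ((Ssum (n+1) j : ℤ) : ℝ) := by
    rw [Ssum]
    push_cast
    rfl
  rw [hcast, Ssum_eq (n+1) hn j]
  norm_cast
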